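/- The conic system P = {x : Ax ≤_K b} is well-behaved if and only if the set {(A*y, ⟨b, y⟩ + s) : y ∈ K*, s ∈ ℝ, s ≥ 0} ⊆ X × ℝ is closed. -/

import Mathlib

open scoped RealInnerProductSpace

noncomputable section

/-- The dual cone of a set `K` in a real inner product space. -/
def dualConeSet {Y : Type*} [NormedAddCommGroup Y] [InnerProductSpace ℝ Y] (K : Set Y) : Set Y :=
  {y | ∀ x ∈ K, 0 ≤ ⟪y, x⟫}

/-- The conic system `P = {x | Ax ≤_K b}` is well-behaved: for every objective `c` for which
the value of `sup {⟪c, x⟫ | b - A x ∈ K}` is finite (i.e. the set of objective values has a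
least upper bound `v`), there is `y ∈ K*` with `A* y = c` and `⟪b, y⟫ = v`. -/
def WellBehavedSystem {X Y : Type*}
    [NormedAddCommGroup X] [InnerProductSpace ℝ X] [FiniteDimensional ℝ X]
    [NormedAddCommGroup Y] [InnerProductSpace ℝ Y] [FiniteDimensional ℝ Y]
    (A : X →ₗ[ℝ] Y) (b : Y) (K : Set Y) : Prop :=
  ∀ (c : X) (v : ℝ), IsLUB {r : ℝ | ∃ x : X, b - A x ∈ K ∧ r = ⟪c, x⟫} v →
    ∃ y ∈ dualConeSet K, LinearMap.adjoint A y = c ∧ ⟪b, y⟫ = v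

section Aux

variable {X Y : Type*}
  [NormedAddCommGroup X] [InnerProductSpace ℝ X] [FiniteDimensional ℝ X]
  [NormedAddCommGroup Y] [InnerProductSpace ℝ Y] [FiniteDimensional ℝ Y]

omit [FiniteDimensional ℝ Y] in
lemma zero_mem_dualConeSet (K : Set Y) : (0 : Y) ∈ dualConeSet K := by
  intro x _; simp [dualConeSet]

omit [FiniteDimensional ℝ Y] in
lemma add_mem_dualConeSet {K : Set Y} {y z : Y} (hy : y ∈ dualConeSet K)
    (hz : z ∈ dualConeSet K) : y + z ∈ dualConeSet K := by
  intro x hx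
  have := add_nonneg (hy x hx) (hz x hx)
  simpa [inner_add_left] using this

omit [FiniteDimensional ℝ Y] in
lemma smul_mem_dualConeSet {K : Set Y} {t : ℝ} (ht : 0 ≤ t) {y : Y}
    (hy : y ∈ dualConeSet K) : t • y ∈ dualConeSet K := by
  intro x hx
  rw [real_inner_smul_left]
  exact mul_nonneg ht (hy x hx)

omit [FiniteDimensional ℝ Y] in
lemma add_mem_of_convexCone {K : Set Y} (hKconv : Convex ℝ K)
    (hKcone : ∀ (t : ℝ), 0 ≤ t → ∀ x ∈ K, t • x ∈ K)
    {x z : Y} (hx : x ∈ K) (hz : z ∈ K) : x + z ∈ K := by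
  have h2 : (1/2 : ℝ) • x + (1/2 : ℝ) • z ∈ K :=
    hKconv hx hz (by norm_num) (by norm_num) (by norm_num)
  have := hKcone 2 (by norm_num) _ h2
  have he : (2:ℝ) • ((1/2 : ℝ) • x + (1/2 : ℝ) • z) = x + z := by
    rw [smul_add, smul_smul, smul_smul]; norm_num
  rwa [he] at this

omit [FiniteDimensional ℝ Y] in
/-- Bipolar: if `⟪y, w⟫ ≥ 0` for all `y` in the dual cone of a nonempty closed convex
cone `K`, then `w ∈ K`. -/
lemma mem_of_forall_dual [CompleteSpace Y] (K : Set Y) (hKclosed : IsClosed K)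
    (hKconv : Convex ℝ K)
    (hKcone : ∀ (t : ℝ), 0 ≤ t → ∀ x ∈ K, t • x ∈ K) (hne : K.Nonempty)
    {w : Y} (hw : ∀ y ∈ dualConeSet K, 0 ≤ ⟪y, w⟫) : w ∈ K := by
  let KC : ConvexCone ℝ Y :=
    { carrier := K
      smul_mem' := fun {c} hc {x} hx => hKcone c hc.le x hx
      add_mem' := fun {x} hx {z} hz => add_mem_of_convexCone hKconv hKcone hx hz }
  by_contra hwK
  let C : ProperCone ℝ Y :=
    { carrier := K
      zero_mem' := by obtain ⟨x, hx⟩ := hne; simpa using hKcone 0 le_rfl x hx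
      add_mem' := fun hx hz => add_mem_of_convexCone hKconv hKcone hx hz
      smul_mem' := fun c x hx => hKcone c c.2 x hx
      isClosed' := hKclosed }
  obtain ⟨y, hy, hwy⟩ := ProperCone.hyperplane_separation' C (x₀ := w) hwK
  have hy' : y ∈ dualConeSet K := fun x hx => by rw [real_inner_comm]; exact hy x hx
  have := hw y hy'
  rw [real_inner_comm] at this
  linarith

variable (A : X →ₗ[ℝ] Y) (b : Y) (K : Set Y)

/-- The augmented dual image set. -/
def augSet : Set (X × ℝ) :=
  {p | ∃ y ∈ dualConeSet K, ∃ s : ℝ, 0 ≤ s ∧ p = (LinearMap.adjoint A y, ⟪b, y⟫ + s)}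

lemma zero_mem_augSet : (0 : X × ℝ) ∈ augSet A b K :=
  ⟨0, zero_mem_dualConeSet K, 0, le_refl 0, by simp [Prod.ext_iff]⟩

lemma augSet_convex : Convex ℝ (augSet A b K) := by
  rintro p ⟨y1, hy1, s1, hs1, rfl⟩ q ⟨y2, hy2, s2, hs2, rfl⟩ a t ha ht habt
  refine ⟨a • y1 + t • y2,
    add_mem_dualConeSet (smul_mem_dualConeSet ha hy1) (smul_mem_dualConeSet ht hy2),
    a * s1 + t * s2, by positivity, ?_⟩
  simp only [Prod.ext_iff, Prod.smul_mk, Prod.mk_add_mk, map_add, map_smul,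
    inner_add_right, real_inner_smul_right, smul_eq_mul]
  exact ⟨trivial, by ring⟩

lemma augSet_smul {t : ℝ} (ht : 0 ≤ t) {p : X × ℝ} (hp : p ∈ augSet A b K) :
    t • p ∈ augSet A b K := by
  obtain ⟨y, hy, s, hs, rfl⟩ := hp
  refine ⟨t • y, smul_mem_dualConeSet ht hy, t * s, by positivity, ?_⟩
  simp only [Prod.ext_iff, Prod.smul_mk, map_smul, real_inner_smul_right, smul_eq_mul]
  exact ⟨trivial, by ring⟩

omit [FiniteDimensional ℝ X] [FiniteDimensional ℝ Y] in
lemma isClosed_ubSet :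
    IsClosed {p : X × ℝ | ∀ x, b - A x ∈ K → ⟪p.1, x⟫ ≤ p.2} := by
  have he : {p : X × ℝ | ∀ x, b - A x ∈ K → ⟪p.1, x⟫ ≤ p.2} =
      ⋂ (x : X) (_ : b - A x ∈ K), {p : X × ℝ | ⟪p.1, x⟫ ≤ p.2} := by
    ext p; simp
  rw [he]
  refine isClosed_iInter fun x => isClosed_iInter fun _ => ?_
  exact isClosed_le (continuous_fst.inner continuous_const) continuous_snd

lemma augSet_subset_ubSet {p : X × ℝ} (hp : p ∈ augSet A b K) :
    ∀ x, b - A x ∈ K → ⟪p.1, x⟫ ≤ p.2 := by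
  obtain ⟨y, hy, s, hs, rfl⟩ := hp
  intro x hx
  have h1 : 0 ≤ ⟪y, b - A x⟫ := hy _ hx
  rw [inner_sub_right] at h1
  have h2 : ⟪(LinearMap.adjoint A) y, x⟫ = ⟪y, A x⟫ := LinearMap.adjoint_inner_left A x y
  have h3 : ⟪b, y⟫ = ⟪y, b⟫ := real_inner_comm y b
  simp only
  linarith

/-- The key separation step: if the augmented set is closed and `(c, v)` dominates the
feasible values, then `(c, v)` belongs to the augmented set. -/
lemma mem_augSet_of_ub (hKclosed : IsClosed K) (hKconv : Convex ℝ K)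
    (hKcone : ∀ (t : ℝ), 0 ≤ t → ∀ x ∈ K, t • x ∈ K)
    (hP : ∃ x : X, b - A x ∈ K)
    (hQ : IsClosed (augSet A b K)) {c : X} {v : ℝ}
    (hub : ∀ x, b - A x ∈ K → ⟪c, x⟫ ≤ v) : (c, v) ∈ augSet A b K := by
  by_contra hcv
  obtain ⟨x₀, hx₀⟩ := hP
  have hKne : K.Nonempty := ⟨_, hx₀⟩
  obtain ⟨f, u, hfQ, hfu⟩ :=
    geometric_hahn_banach_closed_point (augSet_convex A b K) hQ hcv
  have hu0 : 0 < u := by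
    have := hfQ 0 (zero_mem_augSet A b K)
    simpa using this
  have hfle : ∀ p ∈ augSet A b K, f p ≤ 0 := by
    intro p hp
    by_contra hfp
    push_neg at hfp
    have ht : (0:ℝ) < (u + 1) / f p := by positivity
    have h1 := hfQ _ (augSet_smul A b K ht.le hp)
    rw [map_smul, smul_eq_mul, div_mul_cancel₀ _ (ne_of_gt hfp)] at h1
    linarith
  -- represent f
  set x' : X := (InnerProductSpace.toDual ℝ X).symm
    (f.comp (ContinuousLinearMap.inl ℝ X ℝ)) with hx'
  set r : ℝ := f (0, 1) with hr
  have hf : ∀ p : X × ℝ, f p = ⟪x', p.1⟫ + p.2 * r := by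
    intro p
    have h1 : ⟪x', p.1⟫ = f (p.1, 0) := by
      rw [hx', InnerProductSpace.toDual_symm_apply]
      rfl
    have h2 : p = (p.1, (0:ℝ)) + p.2 • ((0:X), (1:ℝ)) := by
      simp [Prod.ext_iff]
    calc f p = f ((p.1, (0:ℝ)) + p.2 • ((0:X), (1:ℝ))) := by rw [← h2]
      _ = f (p.1, 0) + p.2 * f (0, 1) := by rw [map_add, map_smul, smul_eq_mul]
      _ = ⟪x', p.1⟫ + p.2 * r := by rw [h1, hr]
  have hrle : r ≤ 0 := by
    have hmem : ((0:X), (1:ℝ)) ∈ augSet A b K :=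
      ⟨0, zero_mem_dualConeSet K, 1, zero_le_one, by simp [Prod.ext_iff]⟩
    have := hfle _ hmem
    rw [hf] at this
    simpa using this
  have hdual : ∀ y ∈ dualConeSet K, 0 ≤ ⟪y, -(A x' + r • b)⟫ := by
    intro y hy
    have hmem : ((LinearMap.adjoint A) y, ⟪b, y⟫ + 0) ∈ augSet A b K :=
      ⟨y, hy, 0, le_refl 0, rfl⟩
    have h1 := hfle _ hmem
    rw [hf] at h1
    simp only [add_zero] at h1
    have h2 : ⟪x', (LinearMap.adjoint A) y⟫ = ⟪y, A x'⟫ := by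
      rw [real_inner_comm]
      exact LinearMap.adjoint_inner_left A x' y
    have h3 : ⟪b, y⟫ * r = ⟪y, r • b⟫ := by
      rw [real_inner_smul_right, real_inner_comm]; ring
    rw [inner_neg_right, inner_add_right]
    linarith [h1, h2, h3]
  have hwK : -(A x' + r • b) ∈ K :=
    mem_of_forall_dual K hKclosed hKconv hKcone hKne hdual
  have hpos : 0 < ⟪x', c⟫ + v * r := by
    have := hfu
    rw [hf] at this
    simpa using lt_trans hu0 this
  rcases lt_or_eq_of_le hrle with hrneg | hrzero
  · -- r < 0
    have hnr : (0:ℝ) < -r := by linarith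
    have hfeas : b - A ((-r)⁻¹ • x') ∈ K := by
      have he : b - A ((-r)⁻¹ • x') = (-r)⁻¹ • (-(A x' + r • b)) := by
        rw [map_smul]
        match_scalars
        · field_simp; exact (div_self hrneg.ne).symm
        · field_simp
      rw [he]
      exact hKcone _ (by positivity) _ hwK
    have h1 := hub _ hfeas
    rw [real_inner_smul_right] at h1
    have hcx : ⟪x', c⟫ = ⟪c, x'⟫ := real_inner_comm c x'
    have h2 : ⟪c, x'⟫ ≤ (-r) * v := by
      have h3 := mul_le_mul_of_nonneg_left h1 hnr.le
      rwa [← mul_assoc, mul_inv_cancel₀ (ne_of_gt hnr), one_mul] at h3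
    nlinarith
  · -- r = 0
    have hr0 : r = 0 := hrzero
    have hwK' : -A x' ∈ K := by
      have := hwK
      rw [hr0, zero_smul, add_zero] at this
      exact this
    have hγ : 0 < ⟪c, x'⟫ := by
      have hcx : ⟪x', c⟫ = ⟪c, x'⟫ := real_inner_comm c x'
      rw [hr0] at hpos
      simpa [hcx] using hpos
    set γ := ⟪c, x'⟫ with hγdef
    have hx₀v : ⟪c, x₀⟫ ≤ v := hub x₀ hx₀
    set t : ℝ := (v - ⟪c, x₀⟫ + 1) / γ with htdef
    have htpos : 0 ≤ t := by
      apply div_nonneg _ hγ.le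
      linarith
    have hfeas : b - A (x₀ + t • x') ∈ K := by
      have he : b - A (x₀ + t • x') = (b - A x₀) + t • (-A x') := by
        rw [map_add, map_smul]
        module
      rw [he]
      exact add_mem_of_convexCone hKconv hKcone hx₀ (hKcone t htpos _ hwK')
    have h1 := hub _ hfeas
    rw [inner_add_right, real_inner_smul_right] at h1
    have htγ : t * γ = v - ⟪c, x₀⟫ + 1 := div_mul_cancel₀ _ (ne_of_gt hγ)
    linarith

end Aux

/-- `P` is well-behaved iff the set
`{(A*y, ⟨b,y⟩ + s) : y ∈ K*, s ≥ 0} ⊆ X × ℝ` is closed. -/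
theorem wellBehaved_iff_closed_aug
    {X Y : Type*}
    [NormedAddCommGroup X] [InnerProductSpace ℝ X] [FiniteDimensional ℝ X]
    [NormedAddCommGroup Y] [InnerProductSpace ℝ Y] [FiniteDimensional ℝ Y]
    (A : X →ₗ[ℝ] Y) (b : Y) (K : Set Y)
    (hKclosed : IsClosed K) (hKconv : Convex ℝ K)
    (hKcone : ∀ (t : ℝ), 0 ≤ t → ∀ x ∈ K, t • x ∈ K)
    (hP : ∃ x : X, b - A x ∈ K) :
    WellBehavedSystem A b K ↔
      IsClosed {p : X × ℝ | ∃ y ∈ dualConeSet K, ∃ s : ℝ, 0 ≤ s ∧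
        p = (LinearMap.adjoint A y, ⟪b, y⟫ + s)} := by
  show WellBehavedSystem A b K ↔ IsClosed (augSet A b K)
  obtain ⟨x₀, hx₀⟩ := hP
  constructor
  · -- well-behaved ⇒ closed
    intro hWB
    apply isClosed_of_closure_subset
    intro p hp
    have hpC : ∀ x, b - A x ∈ K → ⟪p.1, x⟫ ≤ p.2 := by
      have hsub : augSet A b K ⊆ {q : X × ℝ | ∀ x, b - A x ∈ K → ⟪q.1, x⟫ ≤ q.2} :=
        fun q hq => augSet_subset_ubSet A b K hq
      exact closure_minimal hsub (isClosed_ubSet A b K) hp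
    set S : Set ℝ := {r : ℝ | ∃ x : X, b - A x ∈ K ∧ r = ⟪p.1, x⟫} with hS
    have hSne : S.Nonempty := ⟨⟪p.1, x₀⟫, x₀, hx₀, rfl⟩
    have hSbdd : BddAbove S := ⟨p.2, by rintro r ⟨x, hx, rfl⟩; exact hpC x hx⟩
    have hlub : IsLUB S (sSup S) := isLUB_csSup hSne hSbdd
    obtain ⟨y, hy, hAy, hby⟩ := hWB p.1 (sSup S) hlub
    have hle : sSup S ≤ p.2 := csSup_le hSne (by rintro r ⟨x, hx, rfl⟩; exact hpC x hx)
    refine ⟨y, hy, p.2 - sSup S, by linarith, ?_⟩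
    have : p = (p.1, p.2) := rfl
    rw [this, Prod.mk.injEq]
    exact ⟨hAy.symm, by rw [hby]; ring⟩
  · -- closed ⇒ well-behaved
    intro hQ c v hlub
    have hub : ∀ x, b - A x ∈ K → ⟪c, x⟫ ≤ v := fun x hx => hlub.1 ⟨x, hx, rfl⟩
    have hmem : (c, v) ∈ augSet A b K :=
      mem_augSet_of_ub A b K hKclosed hKconv hKcone ⟨x₀, hx₀⟩ hQ hub
    obtain ⟨y, hy, s, hs, heq⟩ := hmem
    rw [Prod.mk.injEq] at heq
    obtain ⟨hc, hv⟩ := heq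
    have hubd : ⟪b, y⟫ ∈ upperBounds {r : ℝ | ∃ x : X, b - A x ∈ K ∧ r = ⟪c, x⟫} := by
      rintro r ⟨x, hx, rfl⟩
      have := augSet_subset_ubSet A b K (⟨y, hy, 0, le_refl 0, rfl⟩ :
        ((LinearMap.adjoint A) y, ⟪b, y⟫ + 0) ∈ augSet A b K) x hx
      simp only [add_zero] at this
      rw [← hc] at this
      exact this
    have hvle : v ≤ ⟪b, y⟫ := hlub.2 hubd
    exact ⟨y, hy, hc.symm, by linarith⟩
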